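/- Let p = 2^k·q − 1 with k ≥ 2, q prime, λ > 1, 2^k·λ ≤ √p, and λ√p > (p^{1/4}+1)². Suppose E: y² = x³ − mx over Z/p (with computations valid mod every prime divisor of p) admits a point Q such that 2^k·Q ≠ ∞ and q·(2^k·Q) = ∞ in E over every prime divisor of p. Then p is prime. -/

import Mathlib

/-- The elliptic curve `y² = x³ - m·x` over `ZMod r`. -/
def Emx (r : ℕ) (m : ℤ) : WeierstrassCurve.Affine (ZMod r) :=
  { a₁ := 0, a₂ := 0, a₃ := 0, a₄ := -(m : ZMod r), a₆ := 0 }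

open Finset WeierstrassCurve.Affine

/-- Any `n ≡ 3 mod 4` has a prime divisor `≡ 3 mod 4`. -/
lemma my_exists_prime_mod4 : ∀ n : ℕ, n % 4 = 3 → ∃ r : ℕ, r.Prime ∧ r ∣ n ∧ r % 4 = 3 := by
  intro n
  induction n using Nat.strong_induction_on with
  | _ n ih =>
    intro hn
    by_cases hp : n.Prime
    · exact ⟨n, hp, dvd_refl n, hn⟩
    · have h2 : 2 ≤ n := by omega
      obtain ⟨a, ha, ha2, hal⟩ := Nat.exists_dvd_of_not_prime2 h2 hp
      obtain ⟨b, hb⟩ := ha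
      have han : a ∣ n := ⟨b, hb⟩
      have hbn : b ∣ n := ⟨a, by rw [hb]; ring⟩
      have hao : a % 2 = 1 := by
        rcases Nat.even_or_odd a with h | h
        · exfalso
          have : 2 ∣ n := dvd_trans h.two_dvd han
          omega
        · exact Nat.odd_iff.mp h
      have hbo : b % 2 = 1 := by
        rcases Nat.even_or_odd b with h | h
        · exfalso
          have : 2 ∣ n := dvd_trans h.two_dvd hbn
          omega
        · exact Nat.odd_iff.mp h
      have hmod : (a % 4) * (b % 4) % 4 = 3 := by
        rw [← Nat.mul_mod, ← hb]; exact hn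
      have hb2 : 2 ≤ b := by
        by_contra h
        interval_cases b <;> omega
      have hbl : b < n := by
        calc b < 2 * b := by omega
        _ ≤ a * b := Nat.mul_le_mul_right b ha2
        _ = n := hb.symm
      rcases (by omega : a % 4 = 1 ∨ a % 4 = 3) with h | h
      · have hb3 : b % 4 = 3 := by
          rcases (by omega : b % 4 = 1 ∨ b % 4 = 3) with h' | h' <;> [skip; exact h']
          rw [h, h'] at hmod; omega
        obtain ⟨r, hr1, hr2, hr3⟩ := ih b hbl hb3
        exact ⟨r, hr1, hr2.trans hbn, hr3⟩
      · obtain ⟨r, hr1, hr2, hr3⟩ := ih a hal h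
        exact ⟨r, hr1, hr2.trans han, hr3⟩

/-- For a prime `r ≡ 3 mod 4` and `m ≢ 0 mod r`, the curve `y² = x³ - m·x` is
supersingular over `F_r` and has exactly `r + 1` points. -/
lemma my_card_Emx (r : ℕ) [hr : Fact r.Prime] (hr4 : r % 4 = 3) (m : ℤ)
    (hm : ((m : ZMod r)) ≠ 0) : Nat.card (Emx r m).Point = r + 1 := by
  classical
  have hrne2 : r ≠ 2 := by omega
  have hchar : ringChar (ZMod r) ≠ 2 := by
    rw [ZMod.ringChar_zmod_n]; exact hrne2
  set m' : ZMod r := (m : ZMod r) with hm'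
  set f : ZMod r → ZMod r := fun x => x ^ 3 - m' * x with hf
  have heq : ∀ x y : ZMod r, (Emx r m).Equation x y ↔ y ^ 2 = f x := by
    intro x y
    rw [equation_iff]
    simp only [Emx, hf]
    constructor <;> intro h <;> linear_combination h
  have hns : ∀ x y : ZMod r, (Emx r m).Equation x y → (Emx r m).Nonsingular x y := by
    intro x y h
    refine (equation_iff_nonsingular_of_Δ_ne_zero (W := Emx r m) ?_).mp h
    have hΔ : (Emx r m).Δ = 64 * m' ^ 3 := by
      simp only [WeierstrassCurve.Δ, WeierstrassCurve.b₂, WeierstrassCurve.b₄,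
        WeierstrassCurve.b₆, WeierstrassCurve.b₈, Emx]
      ring
    rw [hΔ]
    have h64 : (64 : ZMod r) ≠ 0 := by
      have : ((64 : ℕ) : ZMod r) ≠ 0 := by
        rw [Ne, ZMod.natCast_eq_zero_iff]
        intro hdvd
        have : r ∣ 2 ^ 6 := by norm_num at hdvd ⊢; exact hdvd
        have h2 := (Nat.Prime.dvd_of_dvd_pow hr.out this)
        have := Nat.le_of_dvd (by norm_num) h2
        omega
      simpa using this
    exact mul_ne_zero h64 (pow_ne_zero 3 hm)
  -- the equivalence with option of affine points
  let e : (Emx r m).Point ≃ Option {P : ZMod r × ZMod r // P.2 ^ 2 = f P.1} :=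
  { toFun := fun P => match P with
      | .zero => none
      | .some x y h => some ⟨(x, y), (heq x y).mp h.1⟩
    invFun := fun o => match o with
      | none => .zero
      | some ⟨(x, y), h⟩ => .some x y (hns x y ((heq x y).mpr h))
    left_inv := by rintro (_ | h) <;> rfl
    right_inv := by rintro (_ | ⟨⟨x, y⟩, h⟩) <;> rfl }
  -- count affine points
  have hneg1 : quadraticChar (ZMod r) (-1) = -1 := by
    rw [quadraticChar_neg_one_iff_not_isSquare, ZMod.exists_sq_eq_neg_one_iff]
    simp [hr4]
  have hS : ∑ x : ZMod r, quadraticChar (ZMod r) (f x) = 0 := by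
    have h1 : ∑ x : ZMod r, quadraticChar (ZMod r) (f (-x))
        = ∑ x : ZMod r, quadraticChar (ZMod r) (f x) :=
      Fintype.sum_equiv (Equiv.neg (ZMod r)) _ _ (fun x => rfl)
    have h2 : ∀ x : ZMod r, quadraticChar (ZMod r) (f (-x))
        = - quadraticChar (ZMod r) (f x) := by
      intro x
      have : f (-x) = -1 * f x := by simp only [hf]; ring
      rw [this, map_mul, hneg1, neg_one_mul]
    rw [Finset.sum_congr rfl (fun x _ => h2 x), Finset.sum_neg_distrib] at h1
    linarith
  have hcount : ∀ a : ZMod r,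
      (({y : ZMod r | y ^ 2 = a}.toFinset.card : ℤ)) = quadraticChar (ZMod r) a + 1 :=
    fun a => quadraticChar_card_sqrts hchar a
  have hN3 : ((univ.filter fun P : ZMod r × ZMod r => P.2 ^ 2 = f P.1).card : ℤ) = r := by
    have hsplit : (univ.filter fun P : ZMod r × ZMod r => P.2 ^ 2 = f P.1).card
        = ∑ x : ZMod r, (univ.filter fun y : ZMod r => y ^ 2 = f x).card := by
      rw [Finset.card_filter, Fintype.sum_prod_type]
      exact Finset.sum_congr rfl fun x _ => (Finset.card_filter _ _).symm
    rw [hsplit]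
    push_cast
    have : ∀ x : ZMod r, ((univ.filter fun y : ZMod r => y ^ 2 = f x).card : ℤ)
        = quadraticChar (ZMod r) (f x) + 1 := by
      intro x
      rw [← hcount (f x)]
      congr 1
      rw [Set.toFinset_setOf]
    rw [Finset.sum_congr rfl (fun x _ => this x), Finset.sum_add_distrib, hS]
    simp [ZMod.card]
  -- put it together
  have : Nat.card {P : ZMod r × ZMod r // P.2 ^ 2 = f P.1} = r := by
    rw [Nat.card_eq_fintype_card, Fintype.card_subtype]
    exact_mod_cast hN3
  rw [Nat.card_congr e, Nat.card_eq_fintype_card, Fintype.card_option,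
    ← Nat.card_eq_fintype_card, this]

/-- Lagrange: a point of prime order `q` on a curve with `r + 1` points forces `q ∣ r + 1`. -/
lemma my_dvd (r q : ℕ) [hr : Fact r.Prime] (hq : q.Prime) (m : ℤ)
    (hcard : Nat.card (Emx r m).Point = r + 1) (P : (Emx r m).Point) (hP : P ≠ 0)
    (hPq : q • P = 0) : q ∣ r + 1 := by
  classical
  have hfin : Finite (Emx r m).Point := Nat.finite_of_card_ne_zero (by omega)
  haveI : Fintype (Emx r m).Point := Fintype.ofFinite _
  have h1 : addOrderOf P ∣ q := addOrderOf_dvd_of_nsmul_eq_zero hPq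
  have h2 : addOrderOf P = q := by
    rcases (Nat.Prime.eq_one_or_self_of_dvd hq _ h1) with h | h
    · exact absurd (AddMonoid.addOrderOf_eq_one_iff.mp h) hP
    · exact h
  have h3 : addOrderOf P ∣ Fintype.card (Emx r m).Point := addOrderOf_dvd_card
  rwa [h2, ← Nat.card_eq_fintype_card, hcard] at h3

/-- **Primality test for `p = 2^k·q − 1` with `q` a large prime.**
Let `p = 2^k·q − 1` with `k ≥ 2` and `q` prime, `λ > 1`, `2^k·λ ≤ √p` and
`λ√p > (p^{1/4} + 1)²`.  Suppose `E : y² = x³ − m·x` with `gcd(m, p) = 1` admits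
a point `Q = (x, y)` such that modulo every prime divisor `r` of `p`, the point
`Q` is on `E(F_r)` with `2^k·Q ≠ ∞` and `q·(2^k·Q) = ∞`.  Then `p` is prime. -/
theorem stmt_14 (k q p : ℕ) (hk : 2 ≤ k) (hq : q.Prime) (hp : p = 2 ^ k * q - 1)
    (lam : ℝ) (hlam : 1 < lam)
    (h1 : (2 ^ k : ℝ) * lam ≤ Real.sqrt p)
    (h2 : lam * Real.sqrt p > ((p : ℝ) ^ ((1 : ℝ) / 4) + 1) ^ 2)
    (m x y : ℤ) (hm : Int.gcd m p = 1)
    (H : ∀ (r : ℕ) [Fact r.Prime], r ∣ p →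
      ∃ h : (Emx r m).Nonsingular (x : ZMod r) (y : ZMod r),
        2 ^ k • (WeierstrassCurve.Affine.Point.some _ _ h) ≠ 0 ∧
        q • (2 ^ k • WeierstrassCurve.Affine.Point.some _ _ h) = 0) :
    p.Prime := by
  have hq2 := hq.two_le
  have h2k4 : 4 ≤ 2 ^ k := by
    calc (4 : ℕ) = 2 ^ 2 := by norm_num
    _ ≤ 2 ^ k := Nat.pow_le_pow_right (by norm_num) hk
  have hkq : 8 ≤ 2 ^ k * q := by
    calc (8 : ℕ) = 4 * 2 := by norm_num
    _ ≤ 2 ^ k * q := Nat.mul_le_mul h2k4 hq2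
  have hp1 : p + 1 = 2 ^ k * q := by omega
  have hp7 : 7 ≤ p := by omega
  have h4p : (4 : ℕ) ∣ p + 1 := by
    rw [hp1]
    refine Dvd.dvd.mul_right ⟨2 ^ (k - 2), ?_⟩ q
    rw [show (4 : ℕ) = 2 ^ 2 by norm_num, ← pow_add]
    congr 1
    omega
  have hp4 : p % 4 = 3 := by omega
  -- `q² ≥ p + 2`, via the real hypotheses
  have hq2p : p + 2 ≤ q ^ 2 := by
    have hp0 : (0 : ℝ) < p := by exact_mod_cast (by omega : 0 < p)
    have hs : 0 < Real.sqrt p := Real.sqrt_pos.mpr hp0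
    have hs2 : Real.sqrt p * Real.sqrt p = p := Real.mul_self_sqrt hp0.le
    have hqreal : (q : ℝ) * 2 ^ k = p + 1 := by
      have := congrArg (fun n : ℕ => (n : ℝ)) hp1
      push_cast at this
      linarith
    have h2kpos : (0 : ℝ) < 2 ^ k := by positivity
    have hA : (2 : ℝ) ^ k * (lam * Real.sqrt p) ≤ Real.sqrt p * Real.sqrt p := by
      nlinarith [mul_le_mul_of_nonneg_right h1 hs.le]
    have hgt : lam * Real.sqrt p < q := by nlinarith
    have hq_s : Real.sqrt p < q := by nlinarith
    have hq2R : (p : ℝ) < (q : ℝ) ^ 2 := by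
      rw [pow_two, ← hs2]
      exact mul_self_lt_mul_self hs.le hq_s
    have hq2N : p < q ^ 2 := by exact_mod_cast hq2R
    rcases (by omega : p + 2 ≤ q ^ 2 ∨ q ^ 2 = p + 1) with h | h
    · exact h
    · exfalso
      have hqq : q * q = 2 ^ k * q := by rw [← pow_two, h, hp1]
      have hq2k : q = 2 ^ k := Nat.eq_of_mul_eq_mul_right (by omega) hqq
      have hdvd : 2 ∣ q := hq2k ▸ dvd_pow_self 2 (by omega : k ≠ 0)
      have := (Nat.Prime.eq_one_or_self_of_dvd hq 2 hdvd)
      omega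
  -- pick a prime divisor `r ≡ 3 mod 4` of `p`
  obtain ⟨r, hrp, hrd, hr4⟩ := my_exists_prime_mod4 p hp4
  haveI : Fact r.Prime := ⟨hrp⟩
  have hmr : ((m : ZMod r)) ≠ 0 := by
    intro h0
    have h0' : (r : ℤ) ∣ m := (ZMod.intCast_zmod_eq_zero_iff_dvd m r).mp h0
    have hrm : r ∣ m.natAbs := by
      have := Int.natAbs_dvd_natAbs.mpr h0'
      simpa using this
    have : r ∣ Int.gcd m p := Nat.dvd_gcd hrm (by simpa [Int.natAbs_natCast] using hrd)
    rw [hm] at this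
    have := Nat.le_of_dvd (by norm_num) this
    omega
  obtain ⟨h, hP1, hP2⟩ := H r hrd
  have hcard := my_card_Emx r hr4 m hmr
  have hqr : q ∣ r + 1 := my_dvd r q hq m hcard _ hP1 hP2
  have hrq : q ≤ r + 1 := Nat.le_of_dvd (by omega) hqr
  -- conclude `p = r`
  obtain ⟨s, hs⟩ := hrd
  haveI : Fact q.Prime := ⟨hq⟩
  have hsq : ((s : ℕ) : ZMod q) = 1 := by
    have hpq : ((p : ℕ) : ZMod q) = -1 := by
      have : ((p + 1 : ℕ) : ZMod q) = 0 := by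
        rw [hp1]; push_cast [ZMod.natCast_self]; ring
      push_cast at this
      linear_combination this
    have hrq' : ((r : ℕ) : ZMod q) = -1 := by
      obtain ⟨c, hc⟩ := hqr
      have : ((r + 1 : ℕ) : ZMod q) = 0 := by
        rw [hc]; push_cast [ZMod.natCast_self]; ring
      push_cast at this
      linear_combination this
    have hmul : ((r : ZMod q)) * s = -1 := by
      rw [← Nat.cast_mul, ← hs, hpq]
    rw [hrq'] at hmul
    have : (-1 : ZMod q) * s = (-1) * 1 := by rw [hmul]; ring
    exact mul_left_cancel₀ (neg_ne_zero.mpr one_ne_zero) this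
  have hs1 : s = 1 := by
    by_contra hne
    have hs0 : 0 < s := by
      rcases Nat.eq_zero_or_pos s with h' | h'
      · rw [h', mul_zero] at hs; omega
      · exact h'
    have hdvds : q ∣ s - 1 := by
      have hmod : s ≡ 1 [MOD q] := (ZMod.natCast_eq_natCast_iff s 1 q).mp (by simpa using hsq)
      exact (Nat.modEq_iff_dvd' (by omega : 1 ≤ s)).mp hmod.symm
    have hsge : q + 1 ≤ s := by
      have := Nat.le_of_dvd (by omega) hdvds
      omega
    -- `p = r·s ≥ (q-1)(q+1) = q² - 1 ≥ p + 1`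
    have h1' : (q : ℤ) ≤ r + 1 := by exact_mod_cast hrq
    have h2' : (q : ℤ) + 1 ≤ s := by exact_mod_cast hsge
    have h3' : (p : ℤ) = r * s := by exact_mod_cast hs
    have h4' : (p : ℤ) + 2 ≤ (q : ℤ) ^ 2 := by exact_mod_cast hq2p
    have hr0 : (0 : ℤ) < r := by exact_mod_cast hrp.pos
    have hq0 : (2 : ℤ) ≤ q := by exact_mod_cast hq2
    have hkey : ((q : ℤ) - 1) * ((q : ℤ) + 1) ≤ r * s :=
      mul_le_mul (by linarith) h2' (by linarith) (by linarith)
    nlinarith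
  rw [hs1, mul_one] at hs
  rwa [hs]
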